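/- Let H be a non-empty graph such that the vertex of K_1 does not belong to any local metric basis for the join K_1 + H. Then for any connected graph G of order n, dim_l(G ⊙ H) = n · dim_l(K_1 + H). -/
import Mathlib


open SimpleGraph

/-- A set `S` is a local metric generator for `G` if every pair of adjacent
vertices is distinguished (by distance) by some element of `S`. -/
def IsLocalMetricGenerator {α : Type*} (G : SimpleGraph α) (S : Set α) : Prop :=
  ∀ x y : α, G.Adj x y → ∃ v ∈ S, G.dist v x ≠ G.dist v y

/-- The local metric dimension of a graph. -/
noncomputable def localMetricDim {α : Type*} (G : SimpleGraph α) : ℕ :=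
  sInf {k | ∃ S : Finset α, S.card = k ∧ IsLocalMetricGenerator G ↑S}

/-- A local metric basis: a minimum-cardinality local metric generator. -/
def IsLocalMetricBasis {α : Type*} (G : SimpleGraph α) (S : Finset α) : Prop :=
  IsLocalMetricGenerator G ↑S ∧ S.card = localMetricDim G

/-- The corona product `G ⊙ H`. -/
def corona {α β : Type*} (G : SimpleGraph α) (H : SimpleGraph β) :
    SimpleGraph (α ⊕ α × β) :=
  SimpleGraph.fromRel (fun x y => match x, y with
    | Sum.inl a, Sum.inl a' => G.Adj a a'
    | Sum.inl a, Sum.inr p => a = p.1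
    | Sum.inr p, Sum.inl a => a = p.1
    | Sum.inr p, Sum.inr q => p.1 = q.1 ∧ H.Adj p.2 q.2)

/-- The join `K₁ + H`; the vertex of `K₁` is `none`. -/
def joinK1 {β : Type*} (H : SimpleGraph β) : SimpleGraph (Option β) :=
  SimpleGraph.fromRel (fun x y => match x, y with
    | none, some _ => True
    | some b, some b' => H.Adj b b'
    | _, _ => False)

/-- Eccentricity of a vertex (in `ℕ∞`). -/
noncomputable def ecc {α : Type*} (G : SimpleGraph α) (x : α) : ℕ∞ :=
  ⨆ y, G.edist x y

/-- Radius of a graph (in `ℕ∞`). -/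
noncomputable def gradius {α : Type*} (G : SimpleGraph α) : ℕ∞ :=
  ⨅ x, ecc G x

/-- Diameter of a graph (in `ℕ∞`). -/
noncomputable def gdiam {α : Type*} (G : SimpleGraph α) : ℕ∞ :=
  ⨆ x, ecc G x

section Aux

open Sum

variable {α β : Type*} {G : SimpleGraph α} {H : SimpleGraph β}

lemma joinK1_adj_none_some (H : SimpleGraph β) (b : β) : (joinK1 H).Adj none (some b) := by
  rw [joinK1, SimpleGraph.fromRel_adj]
  exact ⟨by simp, Or.inl trivial⟩

lemma joinK1_adj_some_some {b b' : β} :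
    (joinK1 H).Adj (some b) (some b') ↔ H.Adj b b' := by
  rw [joinK1, SimpleGraph.fromRel_adj]
  constructor
  · rintro ⟨-, h | h⟩
    · exact h
    · exact h.symm
  · intro h
    exact ⟨by simpa using h.ne, Or.inl h⟩

lemma joinK1_connected (H : SimpleGraph β) : (joinK1 H).Connected := by
  have key : ∀ z : Option β, (joinK1 H).Reachable none z := by
    rintro (_ | b)
    · exact Reachable.refl _
    · exact (joinK1_adj_none_some H b).reachable
  rw [connected_iff]
  exact ⟨fun x y => (key x).symm.trans (key y), ⟨none⟩⟩

lemma joinK1_dist_some_none (c : β) : (joinK1 H).dist (some c) none = 1 :=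
  SimpleGraph.dist_eq_one_iff_adj.mpr (joinK1_adj_none_some H c).symm

open scoped Classical in
lemma joinK1_dist_some_some (c b : β) :
    (joinK1 H).dist (some c) (some b) =
      if c = b then 0 else if H.Adj c b then 1 else 2 := by
  split_ifs with h1 h2
  · subst h1; exact SimpleGraph.dist_self
  · exact SimpleGraph.dist_eq_one_iff_adj.mpr (joinK1_adj_some_some.mpr h2)
  · have hle : (joinK1 H).dist (some c) (some b) ≤ 2 := by
      have hw := SimpleGraph.dist_le
        (Walk.cons (joinK1_adj_none_some H c).symm
          (Walk.cons (joinK1_adj_none_some H b) Walk.nil))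
      simpa using hw
    have hpos : 0 < (joinK1 H).dist (some c) (some b) :=
      (joinK1_connected H).pos_dist_of_ne (by simpa using h1)
    have hne1 : (joinK1 H).dist (some c) (some b) ≠ 1 := by
      simp only [ne_eq, SimpleGraph.dist_eq_one_iff_adj, joinK1_adj_some_some]
      exact h2
    omega

lemma corona_adj_inl_inl {a a' : α} :
    (corona G H).Adj (inl a) (inl a') ↔ G.Adj a a' := by
  rw [corona, SimpleGraph.fromRel_adj]
  constructor
  · rintro ⟨-, h | h⟩
    · exact h
    · exact h.symm
  · intro h
    exact ⟨by simpa using h.ne, Or.inl h⟩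

lemma corona_adj_inl_inr {a : α} {p : α × β} :
    (corona G H).Adj (inl a) (inr p) ↔ a = p.1 := by
  rw [corona, SimpleGraph.fromRel_adj]
  simp

lemma corona_adj_inr_inr {p q : α × β} :
    (corona G H).Adj (inr p) (inr q) ↔ p.1 = q.1 ∧ H.Adj p.2 q.2 := by
  rw [corona, SimpleGraph.fromRel_adj]
  constructor
  · rintro ⟨-, ⟨h1, h2⟩ | ⟨h1, h2⟩⟩
    · exact ⟨h1, h2⟩
    · exact ⟨h1.symm, h2.symm⟩
  · rintro ⟨h1, h2⟩
    refine ⟨?_, Or.inl ⟨h1, h2⟩⟩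
    intro he
    have hpq : p = q := Sum.inr_injective he
    exact H.irrefl (hpq ▸ h2)

lemma corona_reachable_inl (hG : G.Connected) (a a' : α) :
    (corona G H).Reachable (inl a) (inl a') := by
  exact Reachable.map (⟨inl, fun h => corona_adj_inl_inl.mpr h⟩ : G →g corona G H) (hG a a')

lemma corona_connected (hG : G.Connected) : (corona G H).Connected := by
  have key : ∀ z : α ⊕ α × β, ∃ a, (corona G H).Reachable z (inl a) := by
    rintro (a | p)
    · exact ⟨a, Reachable.refl _⟩
    · exact ⟨p.1, ((corona_adj_inl_inr.mpr rfl).symm).reachable⟩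
  rw [connected_iff]
  obtain ⟨a₀⟩ := hG.nonempty
  refine ⟨fun x y => ?_, ⟨inl a₀⟩⟩
  obtain ⟨a, hx⟩ := key x
  obtain ⟨a', hy⟩ := key y
  exact (hx.trans (corona_reachable_inl hG a a')).trans hy.symm

lemma corona_dist_inr_inl (a : α) (c : β) :
    (corona G H).dist (inr (a, c)) (inl a) = 1 :=
  SimpleGraph.dist_eq_one_iff_adj.mpr (corona_adj_inl_inr.mpr rfl).symm

open scoped Classical in
lemma corona_dist_inr_inr (hG : G.Connected) (a : α) (c b : β) :
    (corona G H).dist (inr (a, c)) (inr (a, b)) = (joinK1 H).dist (some c) (some b) := by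
  rw [joinK1_dist_some_some]
  split_ifs with h1 h2
  · subst h1; exact SimpleGraph.dist_self
  · exact SimpleGraph.dist_eq_one_iff_adj.mpr (corona_adj_inr_inr.mpr ⟨rfl, h2⟩)
  · have hle : (corona G H).dist (inr (a, c)) (inr (a, b)) ≤ 2 := by
      have hw := SimpleGraph.dist_le (show (corona G H).Walk (inr (a, c)) (inr (a, b)) from
        Walk.cons ((corona_adj_inl_inr (a := a) (p := (a, c))).mpr rfl).symm
          (Walk.cons ((corona_adj_inl_inr (a := a) (p := (a, b))).mpr rfl) Walk.nil))
      simpa using hw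
    have hpos : 0 < (corona G H).dist (inr (a, c)) (inr (a, b)) :=
      (corona_connected hG).pos_dist_of_ne (by simp [h1])
    have hne1 : (corona G H).dist (inr (a, c)) (inr (a, b)) ≠ 1 := by
      simp only [ne_eq, SimpleGraph.dist_eq_one_iff_adj, corona_adj_inr_inr]
      simp [h2]
    omega

lemma corona_walk_ge (a : α) {w : α ⊕ α × β} (hw : ∀ b : β, w ≠ inr (a, b)) :
    ∀ n (b : β) (p : (corona G H).Walk (inr (a, b)) w), p.length = n →
      (corona G H).dist (inl a) w + 1 ≤ n := by
  intro n
  induction n using Nat.strong_induction_on with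
  | _ n ih =>
    intro b p hp
    cases p with
    | nil => exact absurd rfl (hw b)
    | @cons _ z _ h q =>
      rcases z with a' | p'
      · have ha : a' = a := corona_adj_inl_inr.mp h.symm
        subst ha
        have hd := SimpleGraph.dist_le q
        simp only [Walk.length_cons] at hp
        omega
      · obtain ⟨pa, pb⟩ := p'
        obtain ⟨h1, -⟩ := corona_adj_inr_inr.mp h
        simp only at h1
        subst h1
        simp only [Walk.length_cons] at hp
        have := ih q.length (by omega) pb q rfl
        omega

lemma corona_dist_to_inr (hG : G.Connected) (a : α) {w : α ⊕ α × β}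
    (hw : ∀ b : β, w ≠ inr (a, b)) (b : β) :
    (corona G H).dist w (inr (a, b)) = (corona G H).dist w (inl a) + 1 := by
  have hc : (corona G H).Connected := corona_connected hG
  apply le_antisymm
  · obtain ⟨p, hp⟩ := hc.exists_walk_length_eq_dist w (inl a)
    have hd := SimpleGraph.dist_le (p.append (show (corona G H).Walk (inl a) (inr (a, b)) from
      Walk.cons ((corona_adj_inl_inr (a := a) (p := (a, b))).mpr rfl) Walk.nil))
    simpa [hp] using hd
  · obtain ⟨q, hq⟩ := hc.exists_walk_length_eq_dist (inr (a, b)) w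
    have h1 := corona_walk_ge a hw q.length b q rfl
    rw [SimpleGraph.dist_comm (u := w) (v := inr (a, b)),
      SimpleGraph.dist_comm (u := w) (v := inl a)]
    omega

lemma univ_isLocalMetricGenerator {γ : Type*} [Fintype γ] (K : SimpleGraph γ) :
    IsLocalMetricGenerator K ↑(Finset.univ : Finset γ) := by
  intro x y hxy
  refine ⟨x, by simp, ?_⟩
  rw [SimpleGraph.dist_self, SimpleGraph.dist_eq_one_iff_adj.mpr hxy]
  omega

lemma lmSet_nonempty {γ : Type*} [Fintype γ] (K : SimpleGraph γ) :
    {k | ∃ S : Finset γ, S.card = k ∧ IsLocalMetricGenerator K ↑S}.Nonempty :=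
  ⟨(Finset.univ : Finset γ).card, Finset.univ, rfl, univ_isLocalMetricGenerator K⟩

end Aux

/-- If `H` is non-empty and the vertex of `K₁` is in no local metric basis of
`K₁ + H`, then `dim_l (G ⊙ H) = n ⬝ dim_l (K₁ + H)` for connected `G` of order `n`. -/
theorem stmt4 {α β : Type*} [Fintype α] [Fintype β] (G : SimpleGraph α) (H : SimpleGraph β)
    (hG : G.Connected) (hH : ∃ x y, H.Adj x y)
    (hv : ∀ S : Finset (Option β), IsLocalMetricBasis (joinK1 H) S → none ∉ S) :
    localMetricDim (corona G H) = Fintype.card α * localMetricDim (joinK1 H) := by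
  classical
  set m := localMetricDim (joinK1 H) with hmdef
  have hBmem : m ∈ {k | ∃ S : Finset (Option β), S.card = k ∧ IsLocalMetricGenerator (joinK1 H) ↑S} :=
    Nat.sInf_mem (lmSet_nonempty (joinK1 H))
  obtain ⟨B, hBcard, hBgen⟩ := hBmem
  have hBnone : none ∉ B := hv B ⟨hBgen, hBcard⟩
  set B₀ : Finset β := Finset.univ.filter (fun c => some c ∈ B) with hB₀
  have hmemB₀ : ∀ c : β, c ∈ B₀ ↔ some c ∈ B := by intro c; simp [hB₀]
  have hB₀card : B₀.card = B.card := by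
    apply Finset.card_bij (fun c _ => some c)
    · intro c hc; exact (hmemB₀ c).mp hc
    · intro c _ c' _ h; exact Option.some_injective _ h
    · intro o ho
      match o with
      | none => exact absurd ho hBnone
      | some c => exact ⟨c, (hmemB₀ c).mpr ho, rfl⟩
  -- nonempty basis element
  obtain ⟨x₀, y₀, hxy₀⟩ := hH
  obtain ⟨v₀, hv₀, -⟩ := hBgen (some x₀) (some y₀) (joinK1_adj_some_some.mpr hxy₀)
  obtain ⟨c₀, hc₀⟩ : ∃ c, some c ∈ B := by
    match v₀, hv₀ with
    | none, hv₀ => exact absurd hv₀ hBnone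
    | some c, hv₀ => exact ⟨c, hv₀⟩
  have hc₀B₀ : c₀ ∈ B₀ := (hmemB₀ c₀).mpr hc₀
  -- upper bound generator
  set Sup : Finset (α ⊕ α × β) := (Finset.univ ×ˢ B₀).image Sum.inr with hSupdef
  have hSupcard : Sup.card = Fintype.card α * m := by
    rw [hSupdef, Finset.card_image_of_injective _ Sum.inr_injective, Finset.card_product,
      Finset.card_univ, hB₀card, hBcard]
  have hSupmem : ∀ (a : α) (c : β), c ∈ B₀ → Sum.inr (a, c) ∈ Sup := fun a c hc =>
    Finset.mem_image.mpr ⟨(a, c), Finset.mem_product.mpr ⟨Finset.mem_univ _, hc⟩, rfl⟩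
  have hmixed : ∀ b : β, ∃ c ∈ B₀, (joinK1 H).dist (some c) (some b) ≠ 1 := by
    intro b
    obtain ⟨v, hvB, hvd⟩ := hBgen none (some b) (joinK1_adj_none_some H b)
    match v, hvB, hvd with
    | none, hvB, hvd => exact absurd hvB hBnone
    | some c, hvB, hvd =>
      refine ⟨c, (hmemB₀ c).mpr hvB, ?_⟩
      rw [joinK1_dist_some_none] at hvd
      exact hvd.symm
  have hSupGen : IsLocalMetricGenerator (corona G H) ↑Sup := by
    intro x y hxy
    rcases x with a | p
    · rcases y with a' | q
      · -- inl a, inl a'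
        have hadj : G.Adj a a' := corona_adj_inl_inl.mp hxy
        refine ⟨Sum.inr (a, c₀), hSupmem a c₀ hc₀B₀, ?_⟩
        have h2 : (corona G H).dist (Sum.inl a') (Sum.inr (a, c₀)) =
            (corona G H).dist (Sum.inl a') (Sum.inl a) + 1 :=
          corona_dist_to_inr hG a (by simp) c₀
        have h3 : 0 < (corona G H).dist (Sum.inl a') (Sum.inl a) :=
          (corona_connected hG).pos_dist_of_ne (by simp [hadj.ne'])
        rw [corona_dist_inr_inl, SimpleGraph.dist_comm (u := Sum.inr (a, c₀)) (v := Sum.inl a'),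
          h2]
        omega
      · -- inl a, inr q
        obtain ⟨q1, q2⟩ := q
        have ha : a = q1 := corona_adj_inl_inr.mp hxy
        subst ha
        obtain ⟨c, hcB₀, hcd⟩ := hmixed q2
        refine ⟨Sum.inr (a, c), hSupmem a c hcB₀, ?_⟩
        rw [corona_dist_inr_inl, corona_dist_inr_inr hG]
        exact hcd.symm
    · rcases y with a' | q
      · -- inr p, inl a'
        obtain ⟨p1, p2⟩ := p
        have ha : a' = p1 := corona_adj_inl_inr.mp hxy.symm
        subst ha
        obtain ⟨c, hcB₀, hcd⟩ := hmixed p2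
        refine ⟨Sum.inr (a', c), hSupmem a' c hcB₀, ?_⟩
        rw [corona_dist_inr_inl, corona_dist_inr_inr hG]
        exact hcd
      · -- inr p, inr q
        obtain ⟨p1, p2⟩ := p
        obtain ⟨q1, q2⟩ := q
        obtain ⟨h1, h2⟩ := corona_adj_inr_inr.mp hxy
        simp only at h1 h2
        subst h1
        obtain ⟨v, hvB, hvd⟩ := hBgen (some p2) (some q2) (joinK1_adj_some_some.mpr h2)
        match v, hvB, hvd with
        | none, hvB, hvd => exact absurd hvB hBnone
        | some c, hvB, hvd =>
          refine ⟨Sum.inr (p1, c), hSupmem p1 c ((hmemB₀ c).mpr hvB), ?_⟩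
          rw [corona_dist_inr_inr hG, corona_dist_inr_inr hG]
          exact hvd
  have hub : localMetricDim (corona G H) ≤ Fintype.card α * m := by
    have h := Nat.sInf_le (s := {k | ∃ S : Finset (α ⊕ α × β), S.card = k ∧
      IsLocalMetricGenerator (corona G H) ↑S}) ⟨Sup, rfl, hSupGen⟩
    rw [hSupcard] at h
    exact h
  have hlb : Fintype.card α * m ≤ localMetricDim (corona G H) := by
    apply le_csInf (lmSet_nonempty (corona G H))
    rintro k ⟨S, rfl, hSgen⟩
    set F : α → Finset β := fun a => Finset.univ.filter (fun c => Sum.inr (a, c) ∈ S) with hF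
    have hFm : ∀ a : α, m ≤ (F a).card := by
      intro a
      by_contra hlt
      push_neg at hlt
      set T : Finset (Option β) := insert none ((F a).image some) with hT
      have hTgen : IsLocalMetricGenerator (joinK1 H) ↑T := by
        intro x y hxy
        rcases x with - | b
        · rcases y with - | b
          · exact absurd rfl hxy.ne
          · refine ⟨none, by simp [hT], ?_⟩
            rw [SimpleGraph.dist_self,
              SimpleGraph.dist_eq_one_iff_adj.mpr (joinK1_adj_none_some H b)]
            omega
        · rcases y with - | b'
          · refine ⟨none, by simp [hT], ?_⟩
            rw [SimpleGraph.dist_self,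
              SimpleGraph.dist_eq_one_iff_adj.mpr (joinK1_adj_none_some H b)]
            omega
          · have hbb : H.Adj b b' := joinK1_adj_some_some.mp hxy
            obtain ⟨s, hsS, hsd⟩ :=
              hSgen (Sum.inr (a, b)) (Sum.inr (a, b')) (corona_adj_inr_inr.mpr ⟨rfl, hbb⟩)
            rcases s with a' | p'
            · exfalso
              rw [corona_dist_to_inr hG a (by simp) b,
                corona_dist_to_inr hG a (by simp) b'] at hsd
              exact hsd rfl
            · obtain ⟨a', c⟩ := p'
              by_cases haa : a' = a
              · subst haa
                refine ⟨some c, ?_, ?_⟩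
                · have hcF : c ∈ F a' := by
                    rw [hF]; simp only [Finset.mem_filter, Finset.mem_univ, true_and]
                    exact hsS
                  simp only [hT, Finset.coe_insert, Set.mem_insert_iff, Finset.coe_image,
                    Set.mem_image, Finset.mem_coe]
                  exact Or.inr ⟨c, hcF, rfl⟩
                · rw [corona_dist_inr_inr hG, corona_dist_inr_inr hG] at hsd
                  exact hsd
              · exfalso
                rw [corona_dist_to_inr hG a (by simp [haa]) b,
                  corona_dist_to_inr hG a (by simp [haa]) b'] at hsd
                exact hsd rfl
      have hTcard : T.card ≤ (F a).card + 1 := by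
        calc T.card ≤ ((F a).image some).card + 1 := Finset.card_insert_le _ _
          _ ≤ (F a).card + 1 := Nat.add_le_add_right Finset.card_image_le 1
      have hmT : m ≤ T.card := Nat.sInf_le ⟨T, rfl, hTgen⟩
      have hTbasis : IsLocalMetricBasis (joinK1 H) T := ⟨hTgen, by omega⟩
      exact hv T hTbasis (Finset.mem_insert_self _ _)
    set P : Finset (α × β) := Finset.univ.filter (fun p => Sum.inr p ∈ S) with hP
    have hPS : P.card ≤ S.card := by
      apply Finset.card_le_card_of_injOn (fun p => Sum.inr p)
      · intro p hp
        rw [hP] at hp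
        exact (Finset.mem_filter.mp hp).2
      · exact fun p _ q _ h => Sum.inr_injective h
    have hPsum : P.card = ∑ a : α, (F a).card := by
      rw [Finset.card_eq_sum_card_fiberwise (f := Prod.fst) (t := Finset.univ)
        (fun p _ => Finset.mem_univ _)]
      apply Finset.sum_congr rfl
      intro a _
      apply Finset.card_bij (fun p _ => p.2)
      · rintro ⟨p1, p2⟩ hp
        obtain ⟨hp1, hp2⟩ := Finset.mem_filter.mp hp
        simp only at hp2
        subst hp2
        rw [hP] at hp1
        obtain ⟨-, hp1⟩ := Finset.mem_filter.mp hp1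
        rw [hF]
        simp only [Finset.mem_filter, Finset.mem_univ, true_and]
        exact hp1
      · rintro ⟨p1, p2⟩ hp ⟨q1, q2⟩ hq h
        obtain ⟨-, hp2⟩ := Finset.mem_filter.mp hp
        obtain ⟨-, hq2⟩ := Finset.mem_filter.mp hq
        simp only at hp2 hq2 h
        subst hp2; subst hq2; subst h
        rfl
      · intro c hc
        rw [hF] at hc
        obtain ⟨-, hc⟩ := Finset.mem_filter.mp (by exact hc)
        refine ⟨(a, c), ?_, rfl⟩
        apply Finset.mem_filter.mpr
        refine ⟨?_, rfl⟩
        rw [hP]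
        simp only [Finset.mem_filter, Finset.mem_univ, true_and]
        exact hc
    have hsum : Fintype.card α * m ≤ ∑ a : α, (F a).card := by
      calc Fintype.card α * m = ∑ _a : α, m := by
            rw [Finset.sum_const, Finset.card_univ, smul_eq_mul]
        _ ≤ ∑ a : α, (F a).card := Finset.sum_le_sum (fun a _ => hFm a)
    omega
  omega
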